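/- Let η be a configuration on ℤ², let b ∈ ℤ, and let K be a cluster of G_η. Suppose there exist infinitely many pairwise distinct clusters D of the half-plane restriction HP_b(G_η) such that D is infinite, the vertex set of D is contained in the vertex set of K, and the set {x ∈ ℤ : (x,b) ∈ D} is finite. Then K, regarded as a connected graph on its own vertex set, has infinitely many ends. -/

import Mathlib

open MeasureTheory

/-- Vertices of the square lattice `ℤ²`. -/
abbrev Vertex : Type := ℤ × ℤ

/-- Edges of `ℤ²`, encoded as a base vertex together with a direction:
`false` is the horizontal edge from `v` to `v + (1,0)`, `true` the vertical
edge from `v` to `v + (0,1)`. -/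
abbrev Edge : Type := Vertex × Bool

/-- Percolation configurations `η : E(ℤ²) → {0,1}`. -/
abbrev Config : Type := Edge → Bool

/-- The displacement vector of an edge with direction `d`. -/
def edgeDir (d : Bool) : Vertex := if d then (0, 1) else (1, 0)

/-- `joins e u v` says that the edge `e` has endpoints `u` and `v`. -/
def joins (e : Edge) (u v : Vertex) : Prop :=
  (e.1 = u ∧ u + edgeDir e.2 = v) ∨ (e.1 = v ∧ v + edgeDir e.2 = u)

/-- The open subgraph `G_η` of `ℤ²`: two vertices are adjacent iff some open
edge joins them. -/
def openGraph (η : Config) : SimpleGraph Vertex where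
  Adj u v := u ≠ v ∧ ∃ e : Edge, η e = true ∧ joins e u v
  symm := by
    constructor
    rintro u v ⟨hne, e, he, hj⟩
    exact ⟨hne.symm, e, he, hj.symm⟩
  loopless := by
    constructor
    rintro u ⟨hne, -⟩
    exact hne rfl

/-- The half-plane restriction `HP_b(G_η)`: keep only open edges with both
endpoints having second coordinate `≥ b`. -/
def hpGraph (b : ℤ) (η : Config) : SimpleGraph Vertex where
  Adj u v := b ≤ u.2 ∧ b ≤ v.2 ∧ (openGraph η).Adj u v
  symm := by
    constructor
    rintro u v ⟨hu, hv, h⟩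
    exact ⟨hv, hu, h.symm⟩
  loopless := by
    constructor
    rintro u ⟨-, -, h⟩
    exact h.ne rfl

/-- `C` is a cluster (connected component) of `G_η`. -/
def IsCluster (η : Config) (C : Set Vertex) : Prop :=
  ∃ v : Vertex, C = {u | (openGraph η).Reachable v u}

/-- `C` is a cluster of the half-plane restriction `HP_b(G_η)`: the component
of some vertex lying in the half-plane `{y ≥ b}`. -/
def IsClusterHP (b : ℤ) (η : Config) (C : Set Vertex) : Prop :=
  ∃ v : Vertex, b ≤ v.2 ∧ C = {u | (hpGraph b η).Reachable v u}

/-- The dual configuration `η*`: a dual edge is open iff the primal edge it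
crosses is closed.  The dual edge with base `(a,c)` and direction `false`
(going to `(a+1,c)`) crosses the primal vertical edge `{(a+1,c),(a+1,c+1)}`;
the dual edge with base `(a,c)` and direction `true` (going to `(a,c+1)`)
crosses the primal horizontal edge `{(a,c+1),(a+1,c+1)}`. -/
def dualConfig (η : Config) : Config := fun e =>
  if e.2 then !η ((e.1.1, e.1.2 + 1), false) else !η ((e.1.1 + 1, e.1.2), true)

/-- Translation of configurations: `(T_t η)(e) = η (e - t)`. -/
def shift (t : Vertex) (η : Config) : Config := fun e => η (e.1 - t, e.2)

lemma walk_closed {V : Type*} {G : SimpleGraph V} {P : V → Prop}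
    (h : ∀ x y, P x → G.Adj x y → P y) {u v : V} (p : G.Walk u v) : P u → P v := by
  induction p with
  | nil => exact id
  | cons a q ih => exact fun hu => ih (h _ _ hu a)

lemma openGraph_adj_cases {η : Config} {u w : Vertex} (h : (openGraph η).Adj u w) :
    w = u + (1,0) ∨ w = u + (0,1) ∨ u = w + (1,0) ∨ u = w + (0,1) := by
  obtain ⟨-, e, -, hj⟩ := h
  cases hb : e.2 <;> rcases hj with ⟨h1, h2⟩ | ⟨h1, h2⟩ <;>
    simp only [edgeDir, hb, if_true, if_false] at h2
  · exact Or.inl h2.symm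
  · exact Or.inr (Or.inr (Or.inl h2.symm))
  · exact Or.inr (Or.inl h2.symm)
  · exact Or.inr (Or.inr (Or.inr h2.symm))

lemma openGraph_adj_snd {η : Config} {u w : Vertex} (h : (openGraph η).Adj u w) {b : ℤ}
    (hu : b + 1 ≤ u.2) : b ≤ w.2 := by
  rcases openGraph_adj_cases h with h1|h1|h1|h1 <;>
    · have h2 := congrArg Prod.snd h1
      simp only [Prod.snd_add] at h2
      omega

lemma hp_snd_ge {η : Config} {b : ℤ} {v u : Vertex} (h : (hpGraph b η).Reachable v u)
    (hv : b ≤ v.2) : b ≤ u.2 := by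
  obtain ⟨p⟩ := h
  exact walk_closed (G := hpGraph b η) (fun x y _ a => a.2.1) p hv

lemma clusterHP_eq_of_mem {b : ℤ} {η : Config} {D₁ D₂ : Set Vertex} (h₁ : IsClusterHP b η D₁)
    (h₂ : IsClusterHP b η D₂) {x : Vertex} (hx₁ : x ∈ D₁) (hx₂ : x ∈ D₂) : D₁ = D₂ := by
  obtain ⟨v₁, -, rfl⟩ := h₁
  obtain ⟨v₂, -, rfl⟩ := h₂
  have hx₁ : (hpGraph b η).Reachable v₁ x := hx₁
  have hx₂ : (hpGraph b η).Reachable v₂ x := hx₂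
  ext u
  simp only [Set.mem_setOf_eq]
  exact ⟨fun hu => hx₂.trans (hx₁.symm.trans hu), fun hu => hx₁.trans (hx₂.symm.trans hu)⟩

lemma induce_reachable {V : Type*} {G : SimpleGraph V} {K : Set V}
    (hcl : ∀ {x y : V}, x ∈ K → G.Adj x y → y ∈ K) {u v : V} (p : G.Walk u v) :
    ∀ hu : u ∈ K, ∃ hv : v ∈ K, (G.induce K).Reachable ⟨u, hu⟩ ⟨v, hv⟩ := by
  induction p with
  | nil => exact fun hu => ⟨hu, .refl _⟩
  | @cons a c d h q ih =>
      intro hu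
      obtain ⟨hv, hr⟩ := ih (hcl hu h)
      exact ⟨hv, (SimpleGraph.Adj.reachable (by exact h)).trans hr⟩

open CategoryTheory

/-- Subfunctor of `componentComplFunctor` of components meeting `A` in an infinite set. -/
def infFunctor {V : Type} (H : SimpleGraph V) (A : Set V) : (Finset V)ᵒᵖ ⥤ Type where
  obj S := {C : H.componentComplFunctor.obj S // (SimpleGraph.ComponentCompl.supp C ∩ A).Infinite}
  map f := TypeCat.ofHom fun C => ⟨H.componentComplFunctor.map f C.val,
    C.prop.mono (Set.inter_subset_inter_left A
      (C.val.subset_hom (le_of_op_hom f)))⟩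
  map_id S := by
    ext C; exact types_congr_hom (H.componentComplFunctor.map_id S) C.val
  map_comp f g := by
    ext C; exact types_congr_hom (H.componentComplFunctor.map_comp f g) C.val

lemma infFunctor_obj_nonempty {V : Type} (H : SimpleGraph V) [SimpleGraph.LocallyFinite H]
    [Fact H.Preconnected] {A : Set V} (hA : A.Infinite) (S : (Finset V)ᵒᵖ) :
    Nonempty ((infFunctor H A).obj S) := by
  classical
  have hd : (A \ ↑S.unop).Infinite := hA.diff S.unop.finite_toSet
  haveI := hd.to_subtype
  have hnot : ∀ x : ↥(A \ ↑S.unop), (x : V) ∉ (↑S.unop : Set V) := fun x => x.prop.2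
  obtain ⟨C, hC⟩ := Finite.exists_infinite_fiber
    (fun x : ↥(A \ ↑S.unop) => H.componentComplMk (hnot x))
  refine ⟨⟨C, ?_⟩⟩
  rw [← Set.infinite_coe_iff]
  refine Infinite.of_injective
    (fun x : ↥((fun x : ↥(A \ ↑S.unop) => H.componentComplMk (hnot x)) ⁻¹' {C}) =>
      (⟨(x : ↥(A \ ↑S.unop)), ⟨⟨hnot x, x.prop⟩, (x : ↥(A \ ↑S.unop)).prop.1⟩⟩ :
        ↥(SimpleGraph.ComponentCompl.supp C ∩ A))) ?_
  intro x y hxy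
  have h2 := congrArg (fun z : ↥(SimpleGraph.ComponentCompl.supp C ∩ A) => (z : V)) hxy
  exact Subtype.ext (Subtype.ext h2)

lemma exists_end_through {V : Type} (H : SimpleGraph V) [SimpleGraph.LocallyFinite H]
    [Fact H.Preconnected] {A : Set V} (hA : A.Infinite) :
    ∃ e ∈ H.end, ∀ S : (Finset V)ᵒᵖ, (SimpleGraph.ComponentCompl.supp (e S) ∩ A).Infinite := by
  haveI : ∀ S, Finite ((infFunctor H A).obj S) := fun S => by
    dsimp [infFunctor]; infer_instance
  haveI : ∀ S, Nonempty ((infFunctor H A).obj S) := infFunctor_obj_nonempty H hA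
  obtain ⟨s, hs⟩ := nonempty_sections_of_finite_inverse_system (infFunctor H A)
  exact ⟨fun S => (s S).val, fun f => congrArg Subtype.val (hs f), fun S => (s S).prop⟩

/-- Key closure property: a component of `K` minus a set containing the line-trace of a
half-plane cluster `D` which meets `D` is contained in `D`. -/
lemma comp_subset_cluster {η : Config} {b : ℤ} {K : Set Vertex}
    {D : Set Vertex} (hD : IsClusterHP b η D)
    {S : Finset ↥K}
    (hS : ∀ u : ↥K, (u : Vertex) ∈ D → ((u : Vertex)).2 = b → u ∈ S)
    {C : ((openGraph η).induce K).ComponentCompl ↑S}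
    {v w : ↥K} (hv : v ∈ C) (hw : w ∈ C) (hvD : (v : Vertex) ∈ D) : (w : Vertex) ∈ D := by
  obtain ⟨hvS, hvC⟩ := hv
  obtain ⟨hwS, hwC⟩ := hw
  have hreach := (SimpleGraph.ConnectedComponent.eq.mp (hvC.trans hwC.symm))
  obtain ⟨p⟩ := hreach
  obtain ⟨v₀, hv₀, rfl⟩ := hD
  refine walk_closed (P := fun z : ↥((↑S : Set ↥K)ᶜ) => ((z : ↥K) : Vertex) ∈
    {u | (hpGraph b η).Reachable v₀ u}) ?_ p hvD
  rintro x y hx a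
  have a' : (openGraph η).Adj ((x : ↥K) : Vertex) ((y : ↥K) : Vertex) := a
  have hxb : b ≤ ((x : ↥K) : Vertex).2 := hp_snd_ge hx hv₀
  have hxb' : ((x : ↥K) : Vertex).2 ≠ b := by
    intro hEq
    exact x.prop (hS (x : ↥K) hx hEq)
  have hyb : b ≤ ((y : ↥K) : Vertex).2 := openGraph_adj_snd a' (by omega)
  exact SimpleGraph.Reachable.trans hx
    (SimpleGraph.Adj.reachable (⟨hxb, hyb, a'⟩ : (hpGraph b η).Adj _ _))

theorem infinitely_many_ends_of_cluster'
    (η : Config) (b : ℤ) (K : Set Vertex) (hK : ∃ v : Vertex, K = {u | (openGraph η).Reachable v u})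
    (h : {D : Set Vertex | IsClusterHP b η D ∧ D.Infinite ∧ D ⊆ K ∧
          {x : ℤ | (x, b) ∈ D}.Finite}.Infinite) :
    ((openGraph η).induce K).end.Infinite := by
  classical
  obtain ⟨v₀, rfl⟩ := hK
  set K : Set Vertex := {u | (openGraph η).Reachable v₀ u} with hKdef
  -- local finiteness
  have hGfin : ∀ u : Vertex, ((openGraph η).neighborSet u).Finite := by
    intro u
    apply Set.Finite.subset
      ((((Set.finite_singleton (u - (0,1))).insert (u - (1,0))).insert (u + (0,1))).insert
        (u + (1,0)))
    intro w hw
    rcases openGraph_adj_cases hw with h1|h1|h1|h1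
    · rw [h1]
      exact Set.mem_insert _ _
    · rw [h1]
      exact Set.mem_insert_of_mem _ (Set.mem_insert _ _)
    · have hw2 : w = u - (1,0) := eq_sub_of_add_eq h1.symm
      rw [hw2]
      exact Set.mem_insert_of_mem _ (Set.mem_insert_of_mem _ (Set.mem_insert _ _))
    · have hw2 : w = u - (0,1) := eq_sub_of_add_eq h1.symm
      rw [hw2]
      exact Set.mem_insert_of_mem _ (Set.mem_insert_of_mem _ (Set.mem_insert_of_mem _ rfl))
  haveI : SimpleGraph.LocallyFinite ((openGraph η).induce K) := by
    intro v
    have hfin : Finite (((openGraph η).induce K).neighborSet v) := by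
      haveI := (hGfin (v : Vertex)).to_subtype
      refine Finite.of_injective
        (fun w : (((openGraph η).induce K).neighborSet v) =>
          (⟨((w : ↥K) : Vertex), w.prop⟩ : ((openGraph η).neighborSet (v : Vertex)))) ?_
      intro x y hxy
      have h2 := congrArg Subtype.val hxy
      exact Subtype.ext (Subtype.ext h2)
    exact Fintype.ofFinite _
  -- preconnectedness
  have hKcl : ∀ {x y : Vertex}, x ∈ K → (openGraph η).Adj x y → y ∈ K :=
    fun hx a => SimpleGraph.Reachable.trans hx a.reachable
  have hv₀K : v₀ ∈ K := SimpleGraph.Reachable.refl v₀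
  haveI : Fact ((openGraph η).induce K).Preconnected := by
    constructor
    intro a c
    have hcomp : ∀ x : ↥K, ((openGraph η).induce K).Reachable ⟨v₀, hv₀K⟩ x := by
      intro x
      obtain ⟨p⟩ := (x.prop : (openGraph η).Reachable v₀ (x : Vertex))
      obtain ⟨hv, hr⟩ := induce_reachable hKcl p hv₀K
      exact hr.trans (by rw [show (⟨(x : Vertex), hv⟩ : ↥K) = x from Subtype.ext rfl])
    exact (hcomp a).symm.trans (hcomp c)
  -- the family
  set Fam := {D : Set Vertex | IsClusterHP b η D ∧ D.Infinite ∧ D ⊆ K ∧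
      {x : ℤ | (x, b) ∈ D}.Finite} with hFam
  haveI : Infinite ↥Fam := h.to_subtype
  -- the chosen ends
  have hend : ∀ D : ↥Fam, ∃ e ∈ ((openGraph η).induce K).end,
      ∀ S : (Finset ↥K)ᵒᵖ,
        (SimpleGraph.ComponentCompl.supp (e S) ∩ (Subtype.val ⁻¹' (D : Set Vertex))).Infinite := by
    intro D
    apply exists_end_through
    rw [← Set.infinite_coe_iff]
    haveI := (D.prop.2.1).to_subtype
    refine Infinite.of_injective
      (fun d : ↥(D : Set Vertex) =>
        (⟨⟨(d : Vertex), D.prop.2.2.1 d.prop⟩, d.prop⟩ :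
          ↥(Subtype.val ⁻¹' (D : Set Vertex)))) ?_
    intro x y hxy
    have h2 := congrArg
      (fun z : ↥(Subtype.val ⁻¹' (D : Set Vertex)) => ((z : ↥K) : Vertex)) hxy
    exact Subtype.ext h2
  choose f hf1 hf2 using hend
  refine Set.infinite_of_injective_forall_mem (f := f) ?_ hf1
  intro D₁ D₂ hEq
  -- build the separating finite set
  have trace_fin : ∀ D : ↥Fam, {u : ↥K | (u : Vertex) ∈ (D : Set Vertex) ∧
      ((u : Vertex)).2 = b}.Finite := by
    intro D
    rw [← Set.finite_coe_iff]
    haveI := (D.prop.2.2.2).to_subtype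
    refine Finite.of_injective
      (fun u : ↥{u : ↥K | (u : Vertex) ∈ (D : Set Vertex) ∧ ((u : Vertex)).2 = b} =>
        (⟨(((u : ↥K) : Vertex)).1, by
          have h3 : (((((u : ↥K) : Vertex)).1, b) : Vertex) = ((u : ↥K) : Vertex) :=
            Prod.ext_iff.mpr ⟨rfl, u.prop.2.symm⟩
          rw [Set.mem_setOf_eq, h3]
          exact u.prop.1⟩ : ↥{x : ℤ | (x, b) ∈ (D : Set Vertex)})) ?_
    intro x y hxy
    have h2 : (((x : ↥K) : Vertex)).1 = (((y : ↥K) : Vertex)).1 :=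
      congrArg (fun z : ↥{x : ℤ | (x, b) ∈ (D : Set Vertex)} => (z : ℤ)) hxy
    apply Subtype.ext; apply Subtype.ext
    exact Prod.ext_iff.mpr ⟨h2, x.prop.2.trans y.prop.2.symm⟩
  set S₀ : Finset ↥K := ((trace_fin D₁).union (trace_fin D₂)).toFinset with hS₀
  have hS₀mem : ∀ (D : ↥Fam), D = D₁ ∨ D = D₂ → ∀ u : ↥K, (u : Vertex) ∈ (D : Set Vertex) →
      ((u : Vertex)).2 = b → u ∈ S₀ := by
    rintro D (rfl | rfl) u hu h2 <;>
      · rw [hS₀, Set.Finite.mem_toFinset]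
        first
          | exact Or.inl ⟨hu, h2⟩
          | exact Or.inr ⟨hu, h2⟩
  -- compare components at S₀
  have h1 := hf2 D₁ (Opposite.op S₀)
  have h2 := hf2 D₂ (Opposite.op S₀)
  rw [← hEq] at h2
  obtain ⟨v, hvC, hvD⟩ := h1.nonempty
  obtain ⟨w, hwC, hwD⟩ := h2.nonempty
  have hwD₁ : (w : Vertex) ∈ (D₁ : Set Vertex) :=
    comp_subset_cluster D₁.prop.1 (hS₀mem D₁ (Or.inl rfl)) hvC hwC hvD
  exact Subtype.ext (clusterHP_eq_of_mem D₁.prop.1 D₂.prop.1 hwD₁ hwD)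


/-- Let `K` be a cluster of `G_η`.  If there are infinitely
many distinct infinite clusters `D` of the half-plane restriction `HP_b(G_η)`
contained in `K` which meet the line `y = b` in a finite set, then `K`
(as a graph on its own vertex set) has infinitely many ends. -/
theorem infinitely_many_ends_of_cluster
    (η : Config) (b : ℤ) (K : Set Vertex) (hK : IsCluster η K)
    (h : {D : Set Vertex | IsClusterHP b η D ∧ D.Infinite ∧ D ⊆ K ∧
          {x : ℤ | (x, b) ∈ D}.Finite}.Infinite) :
    ((openGraph η).induce K).end.Infinite :=
  infinitely_many_ends_of_cluster' η b K hK h
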